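/- There exists a power series F ∈ ℤ⟦x,y⟧ such that: (i) for every prime p there exists G ∈ ℤ⟦x,y⟧ with F − p·G ∈ ℤ⟦x⟧·ℤ⟦y⟧ (i.e., the class of F in the quotient ℤ⟦x,y⟧/(ℤ⟦x⟧·ℤ⟦y⟧) is divisible by every prime); and (ii) for every prime p and every integer d ≥ p, the reduction modulo p of F(x,y) − F(y,x), viewed as a power series in y with coefficients in 𝔽_p⟮x⟯, has a p,d-sieve with respect to k = 𝔽_p and K = 𝔽_p(x). -/

import Mathlib

noncomputable section

/-- `f(x)·g(y)` as an element of `ℤ⟦x,y⟧`, realized as `(ℤ⟦x⟧)⟦y⟧`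
(inner variable `x`, outer variable `y`). -/
def prodXY (f g : PowerSeries ℤ) : PowerSeries (PowerSeries ℤ) :=
  PowerSeries.mk fun i => (PowerSeries.coeff (R := ℤ) i g) • f

/-- The additive subgroup `ℤ⟦x⟧·ℤ⟦y⟧ ⊆ ℤ⟦x,y⟧` of series of finite rank, i.e. finite sums
`Σ f_i(x)·g_i(y)`. -/
def finiteRank : AddSubgroup (PowerSeries (PowerSeries ℤ)) :=
  AddSubgroup.closure {F | ∃ f g : PowerSeries ℤ, F = prodXY f g}

/-- The swap `F(x,y) ↦ F(y,x)` on `ℤ⟦x,y⟧`. -/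
def swapXY (F : PowerSeries (PowerSeries ℤ)) : PowerSeries (PowerSeries ℤ) :=
  PowerSeries.mk fun i => PowerSeries.mk fun j =>
    PowerSeries.coeff (R := ℤ) i (PowerSeries.coeff (R := (PowerSeries ℤ)) j F)

/-- A power series `F = Σ f_j yʲ ∈ A⟦y⟧` has an `n,d`-sieve (with respect to a field `K` acting
on `A`) if there is `m ≥ 0` such that `f_{m+ld+i} = 0` for all `0 ≤ l ≤ n`, `1 ≤ i ≤ d−1`, and
the coefficients `f_{m+d}, f_{m+2d}, …, f_{m+nd}` are linearly independent over `K`. -/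
def HasSieve (K A : Type) [Field K] [CommRing A] [Algebra K A] (n d : ℕ)
    (F : PowerSeries A) : Prop :=
  ∃ m : ℕ,
    (∀ l : ℕ, l ≤ n → ∀ i : ℕ, 1 ≤ i → i ≤ d - 1 →
      PowerSeries.coeff (R := A) (m + l * d + i) F = 0) ∧
    LinearIndependent K fun l : Fin n => PowerSeries.coeff (R := A) (m + ((l : ℕ) + 1) * d) F

/-- Reduction of `F ∈ ℤ⟦x,y⟧ = (ℤ⟦x⟧)⟦y⟧` modulo a prime `p`, viewed as a power series in `y`
with coefficients in the field of Laurent series `𝔽_p⸨x⸩`. -/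
def modP (p : ℕ) [Fact p.Prime] :
    PowerSeries (PowerSeries ℤ) →+* PowerSeries (LaurentSeries (ZMod p)) :=
  PowerSeries.map ((HahnSeries.ofPowerSeries ℤ (ZMod p)).comp
    (PowerSeries.map (Int.castRingHom (ZMod p))))

open scoped RatFunc

namespace L38

open scoped Classical

/-! ### The building blocks -/

/-- Index of the `k`-th exponent used by the series `u p l`. -/
def sidx (p l k : ℕ) : ℕ := Nat.pair (Nat.pair p l) k

/-- The `k`-th exponent of the series `u p l`; all exponents live in the sparse set
`{3·4^s}`. -/
def expo (p l k : ℕ) : ℕ := 3 * 4 ^ sidx p l k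

/-- Sparse 0/1 power series with pairwise disjoint supports. -/
def u (p l : ℕ) : PowerSeries ℤ :=
  PowerSeries.mk fun a => if ∃ k, a = expo p l k then 1 else 0

/-- Decoding of a `y`-index: which block it belongs to. -/
def tOf (b : ℕ) : ℕ := Nat.log 4 b - 2
def pOf (b : ℕ) : ℕ := (Nat.unpair (tOf b)).1
def dOf (b : ℕ) : ℕ := (Nat.unpair (tOf b)).2
def mOf (b : ℕ) : ℕ := 4 ^ (tOf b + 2)
def lOf (b : ℕ) : ℕ := (b - mOf b) / dOf b

/-- `b` is a "live" column: `b = 4^(pair p d + 2) + l·d` with `p` prime, `p ≤ d`,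
`1 ≤ l ≤ p`. -/
def Good (b : ℕ) : Prop :=
  (pOf b).Prime ∧ pOf b ≤ dOf b ∧ 1 ≤ lOf b ∧ lOf b ≤ pOf b ∧ b = mOf b + lOf b * dOf b

/-- The `y^b`-coefficient of our series `F`. -/
def fcoef (b : ℕ) : PowerSeries ℤ :=
  if Good b then ((pOf b - 1).factorial : ℤ) • u (pOf b) (lOf b) else 0

/-- The series `F` witnessing the theorem. -/
def FF : PowerSeries (PowerSeries ℤ) := PowerSeries.mk fcoef

/-! ### Arithmetic facts about the layout -/

lemma sq_lt (t : ℕ) : (t + 1) * (t + 1) < 4 ^ (t + 1) := by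
  have h : t + 1 < 2 ^ (t + 1) := Nat.lt_pow_self (by norm_num)
  calc (t+1) * (t+1) < 2 ^ (t+1) * 2 ^ (t+1) := Nat.mul_lt_mul'' h h
    _ = 4 ^ (t+1) := by rw [← mul_pow]; norm_num

lemma z_lt (t z : ℕ) (h2 : z ≤ (t + 1) * (t + 1)) : z < 4 ^ (t + 2) := by
  have := sq_lt t
  have h4 : (4:ℕ) ^ (t+1) ≤ 4 ^ (t+2) := Nat.pow_le_pow_right (by norm_num) (by omega)
  omega

lemma tOf_add (t z : ℕ) (h1 : 1 ≤ z) (h2 : z ≤ (t + 1) * (t + 1)) :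
    tOf (4 ^ (t + 2) + z) = t := by
  have hz : z < 4 ^ (t + 2) := z_lt t z h2
  have hlog : Nat.log 4 (4 ^ (t + 2) + z) = t + 2 := by
    apply Nat.log_eq_of_pow_le_of_lt_pow (by omega)
    have : (4:ℕ) ^ (t + 3) = 4 * 4 ^ (t + 2) := by ring
    omega
  simp [tOf, hlog]

/-- Points inside the windows are not of the form `3·4^s`. -/
lemma notE_add (t z : ℕ) (h1 : 1 ≤ z) (h2 : z ≤ (t + 1) * (t + 1)) (s : ℕ) :
    4 ^ (t + 2) + z ≠ 3 * 4 ^ s := by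
  have hz : z < 4 ^ (t + 2) := z_lt t z h2
  intro h
  rcases le_or_gt s (t + 1) with hs | hs
  · have : (4:ℕ) ^ s ≤ 4 ^ (t+1) := Nat.pow_le_pow_right (by norm_num) hs
    have h4 : (4:ℕ) ^ (t + 2) = 4 * 4 ^ (t + 1) := by ring
    omega
  · have : (4:ℕ) ^ (t+2) ≤ 4 ^ s := Nat.pow_le_pow_right (by norm_num) hs
    omega

lemma pd_le (p d l : ℕ) (hl : l ≤ p) (hd : 1 ≤ d) :
    l * d ≤ (Nat.pair p d + 1) * (Nat.pair p d + 1) := by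
  have h1 : p ≤ Nat.pair p d := Nat.left_le_pair p d
  have h2 : d ≤ Nat.pair p d := Nat.right_le_pair p d
  calc l * d ≤ p * d := Nat.mul_le_mul_right d hl
    _ ≤ Nat.pair p d * Nat.pair p d := Nat.mul_le_mul h1 h2
    _ ≤ _ := by nlinarith

lemma pd_le' (p d l i : ℕ) (hl : l ≤ p) (hd : 1 ≤ d) (hi : i ≤ d - 1) :
    l * d + i ≤ (Nat.pair p d + 1) * (Nat.pair p d + 1) := by
  have h1 : p ≤ Nat.pair p d := Nat.left_le_pair p d
  have h2 : d ≤ Nat.pair p d := Nat.right_le_pair p d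
  have : l * d + i ≤ p * d + d := by
    have := Nat.mul_le_mul_right d hl; omega
  calc l * d + i ≤ p * d + d := this
    _ ≤ Nat.pair p d * Nat.pair p d + Nat.pair p d := by
        have := Nat.mul_le_mul h1 h2; omega
    _ ≤ _ := by nlinarith

/-- Decoding a column index of the form `4^(pair p d + 2) + l·d`. -/
lemma decode_col (p d l : ℕ) (hd : 1 ≤ d) (hl : 1 ≤ l) (hlp : l ≤ p) :
    tOf (4 ^ (Nat.pair p d + 2) + l * d) = Nat.pair p d ∧
    pOf (4 ^ (Nat.pair p d + 2) + l * d) = p ∧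
    dOf (4 ^ (Nat.pair p d + 2) + l * d) = d ∧
    mOf (4 ^ (Nat.pair p d + 2) + l * d) = 4 ^ (Nat.pair p d + 2) ∧
    lOf (4 ^ (Nat.pair p d + 2) + l * d) = l := by
  have h1 : 1 ≤ l * d := Nat.one_le_iff_ne_zero.mpr (by positivity)
  have ht := tOf_add (Nat.pair p d) (l * d) h1 (pd_le p d l hlp hd)
  refine ⟨ht, ?_, ?_, ?_, ?_⟩
  · simp [pOf, ht]
  · simp [dOf, ht]
  · simp [mOf, ht]
  · simp only [lOf, mOf, dOf, ht, Nat.unpair_pair]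
    rw [Nat.add_sub_cancel_left, Nat.mul_div_cancel _ (by omega)]

lemma good_col (p d l : ℕ) (hp : p.Prime) (hpd : p ≤ d) (hl : 1 ≤ l) (hlp : l ≤ p) :
    Good (4 ^ (Nat.pair p d + 2) + l * d) := by
  obtain ⟨ht, hP, hD, hM, hL⟩ := decode_col p d l (by have := hp.two_le; omega) hl hlp
  refine ⟨?_, ?_, ?_, ?_, ?_⟩
  · rw [hP]; exact hp
  · rw [hP, hD]; exact hpd
  · omega
  · omega
  · rw [hM, hL, hD]

lemma not_good_mid (p d l i : ℕ) (hp : 2 ≤ p) (hpd : p ≤ d) (hl : l ≤ p)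
    (hi1 : 1 ≤ i) (hi2 : i ≤ d - 1) :
    ¬ Good (4 ^ (Nat.pair p d + 2) + (l * d + i)) := by
  have hd : 2 ≤ d := le_trans hp hpd
  have h1 : 1 ≤ l * d + i := by omega
  have ht := tOf_add (Nat.pair p d) (l * d + i) h1 (pd_le' p d l i hl (by omega) hi2)
  intro hG
  obtain ⟨-, -, -, -, hb⟩ := hG
  rw [show mOf _ = 4 ^ (Nat.pair p d + 2) by simp [mOf, ht],
    show dOf _ = d by simp [dOf, ht]] at hb
  have : l * d + i = lOf (4 ^ (Nat.pair p d + 2) + (l * d + i)) * d := by omega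
  have hdvd : d ∣ i := by
    have h2 : d ∣ l * d + i := this ▸ ⟨lOf (4 ^ (Nat.pair p d + 2) + (l * d + i)), by ring⟩
    exact (Nat.dvd_add_right ⟨l, by ring⟩).mp h2
  have := Nat.le_of_dvd (by omega) hdvd
  omega

/-! ### Coefficient lemmas -/

lemma coeff_u (p l a : ℕ) :
    PowerSeries.coeff (R := ℤ) a (u p l) = if ∃ k, a = expo p l k then 1 else 0 := by
  simp [u]

lemma coeff_u_notE {a : ℕ} (h : ∀ s, a ≠ 3 * 4 ^ s) (p l : ℕ) :
    PowerSeries.coeff (R := ℤ) a (u p l) = 0 := by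
  rw [coeff_u, if_neg]; rintro ⟨k, hk⟩; exact h _ hk

lemma coeff_fcoef_notE {a : ℕ} (h : ∀ s, a ≠ 3 * 4 ^ s) (j : ℕ) :
    PowerSeries.coeff (R := ℤ) a (fcoef j) = 0 := by
  unfold fcoef
  split
  · rw [map_zsmul, coeff_u_notE h, smul_zero]
  · simp

lemma coeff_FF (b : ℕ) : PowerSeries.coeff (R := _) b FF = fcoef b := by simp [FF]

lemma coeff_swap_FF (b : ℕ) :
    PowerSeries.coeff (R := _) b (swapXY FF) =
      PowerSeries.mk fun j => PowerSeries.coeff (R := ℤ) b (fcoef j) := by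
  simp [swapXY, FF]

lemma swap_row_zero {b : ℕ} (h : ∀ s, b ≠ 3 * 4 ^ s) :
    PowerSeries.coeff (R := _) b (swapXY FF) = 0 := by
  rw [coeff_swap_FF]
  apply PowerSeries.ext; intro j
  rw [PowerSeries.coeff_mk, coeff_fcoef_notE h, map_zero]

/-! ### Divisibility modulo every prime -/

/-- Witness for divisibility by `q`. -/
def GG (q : ℕ) : PowerSeries (PowerSeries ℤ) :=
  PowerSeries.mk fun b =>
    if Good b ∧ q < pOf b then (((pOf b - 1).factorial / q : ℕ) : ℤ) • u (pOf b) (lOf b)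
    else 0

/-- The `y`-side series collecting all columns with parameter `(p, l)`. -/
def yser (p l : ℕ) : PowerSeries ℤ :=
  PowerSeries.mk fun b =>
    if Good b ∧ pOf b = p ∧ lOf b = l then ((p - 1).factorial : ℤ) else 0

lemma coeff_prodXY (f g : PowerSeries ℤ) (b : ℕ) :
    PowerSeries.coeff (R := _) b (prodXY f g) = (PowerSeries.coeff (R := ℤ) b g) • f := by
  simp [prodXY]

lemma main_div (q : ℕ) (hq : q.Prime) :
    FF - q • GG q =
      ∑ pl ∈ Finset.range (q+1) ×ˢ Finset.range (q+1),
        prodXY (u pl.1 pl.2) (yser pl.1 pl.2) := by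
  apply PowerSeries.ext; intro b
  rw [map_sub, map_nsmul, map_sum, coeff_FF]
  simp only [coeff_prodXY]
  by_cases hg : Good b
  · by_cases hpq : pOf b ≤ q
    · rw [show PowerSeries.coeff (R := _) b (GG q) = 0 by simp [GG, PowerSeries.coeff_mk]; omega]
      rw [smul_zero, sub_zero]
      rw [Finset.sum_eq_single_of_mem (pOf b, lOf b)
        (by simp [Finset.mem_product]; exact ⟨by omega, by have := hg.2.2.2.1; omega⟩)]
      · rw [fcoef, if_pos hg, yser, PowerSeries.coeff_mk, if_pos ⟨hg, rfl, rfl⟩]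
      · rintro ⟨p', l'⟩ - hne
        rw [yser, PowerSeries.coeff_mk, if_neg, zero_smul]
        rintro ⟨-, h1, h2⟩
        exact hne (Prod.ext h1.symm h2.symm)
    · push_neg at hpq
      have hdvd : q ∣ (pOf b - 1).factorial := by
        apply Nat.dvd_factorial hq.pos
        have := hg.1.two_le; omega
      rw [show PowerSeries.coeff (R := _) b (GG q) =
          (((pOf b - 1).factorial / q : ℕ) : ℤ) • u (pOf b) (lOf b) by
        simp [GG, PowerSeries.coeff_mk, hg, hpq]]
      rw [fcoef, if_pos hg]
      rw [← Nat.cast_smul_eq_nsmul ℤ q, smul_smul]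
      rw [show ((q:ℤ) * (((pOf b - 1).factorial / q : ℕ) : ℤ)) = ((pOf b - 1).factorial : ℤ) by
        rw [← Nat.cast_mul, Nat.mul_div_cancel' hdvd]]
      rw [sub_self]
      symm
      apply Finset.sum_eq_zero
      rintro ⟨p', l'⟩ hmem
      rw [yser, PowerSeries.coeff_mk, if_neg, zero_smul]
      rintro ⟨-, h1, -⟩
      simp only [Finset.mem_product, Finset.mem_range] at hmem
      omega
  · rw [fcoef, if_neg hg,
      show PowerSeries.coeff (R := _) b (GG q) = 0 by simp [GG, PowerSeries.coeff_mk, hg]]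
    rw [smul_zero, sub_zero]
    symm
    apply Finset.sum_eq_zero
    rintro ⟨p', l'⟩ -
    rw [yser, PowerSeries.coeff_mk, if_neg (fun h => hg h.1), zero_smul]

theorem part_one (q : ℕ) (hq : q.Prime) : ∃ G, FF - q • G ∈ finiteRank :=
  ⟨GG q, by
    rw [main_div q hq]
    exact AddSubgroup.sum_mem _ fun pl _ => AddSubgroup.subset_closure ⟨_, _, rfl⟩⟩

/-! ### Linear independence of the reductions -/

variable (P : ℕ) [Fact P.Prime]

lemma coeff_v (p l a : ℕ) :
    PowerSeries.coeff (R := (ZMod P)) a (PowerSeries.map (Int.castRingHom (ZMod P)) (u p l)) =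
      if ∃ k, a = expo p l k then 1 else 0 := by
  rw [PowerSeries.coeff_map, coeff_u]
  split <;> simp

theorem u_li (p n : ℕ) :
    LinearIndependent (Polynomial (ZMod P))
      (fun l : Fin n => PowerSeries.map (Int.castRingHom (ZMod P)) (u p ((l : ℕ) + 1))) := by
  set v := fun l : Fin n => PowerSeries.map (Int.castRingHom (ZMod P)) (u p ((l : ℕ) + 1))
    with hv
  rw [Fintype.linearIndependent_iff]
  intro g hg l₀
  by_contra hne
  set D := Finset.univ.sup (fun l : Fin n => (g l).natDegree) with hD
  have hdeg : ∀ l : Fin n, (g l).natDegree ≤ D :=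
    fun l => Finset.le_sup (f := fun l : Fin n => (g l).natDegree) (Finset.mem_univ l)
  set s := sidx p ((l₀ : ℕ) + 1) (2 * D + 1) with hs_def
  have hk : 2 * D + 1 ≤ s := Nat.right_le_pair _ _
  have hs1 : 1 ≤ s := by omega
  set c := 3 * 4 ^ s with hc
  set N := c + (g l₀).natDegree with hN
  set A := 4 ^ (s - 1) with hA
  have hA1 : s - 1 < A := Nat.lt_pow_self (by norm_num)
  have h4s : 4 ^ s = 4 * A := by
    rw [hA, ← pow_succ']
    congr 1
    omega
  -- separation: the only support point of any `v l` near `N` is `c`, in `v l₀`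
  have sep : ∀ (l : Fin n) (k a b' : ℕ), a + b' = N → a ≤ D →
      b' = expo p ((l : ℕ) + 1) k → l = l₀ ∧ k = 2 * D + 1 := by
    intro l k a b' hab haD hb'
    set s' := sidx p ((l : ℕ) + 1) k with hs'
    have hss : s' = s := by
      rcases lt_trichotomy s' s with h | h | h
      · exfalso
        have hb3 : b' ≤ 3 * A := by
          rw [hb']
          have : (4:ℕ) ^ s' ≤ 4 ^ (s - 1) := Nat.pow_le_pow_right (by norm_num) (by omega)
          simp only [expo, ← hs']
          omega
        have hdeg0 : (g l₀).natDegree ≤ D := hdeg l₀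
        omega
      · exact h
      · exfalso
        have hb3 : 48 * A ≤ b' := by
          rw [hb']
          have : (4:ℕ) ^ (s + 1) ≤ 4 ^ s' := Nat.pow_le_pow_right (by norm_num) (by omega)
          have h41 : (4:ℕ) ^ (s + 1) = 16 * A := by rw [pow_succ, h4s]; ring
          simp only [expo, ← hs']
          omega
        have hdeg0 : (g l₀).natDegree ≤ D := hdeg l₀
        omega
    have h5 := hss
    rw [hs', hs_def] at h5
    obtain ⟨h1, h2⟩ := Nat.pair_eq_pair.mp h5
    obtain ⟨-, h3⟩ := Nat.pair_eq_pair.mp h1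
    exact ⟨Fin.ext (by omega), h2⟩
  have h0 : PowerSeries.coeff (R := (ZMod P)) N (∑ l, g l • v l) = 0 := by rw [hg, map_zero]
  rw [map_sum] at h0
  have hterm : ∀ l : Fin n, PowerSeries.coeff (R := (ZMod P)) N (g l • v l) =
      ∑ ab ∈ Finset.HasAntidiagonal.antidiagonal N,
        (g l).coeff ab.1 * PowerSeries.coeff (R := (ZMod P)) ab.2 (v l) := by
    intro l
    rw [show g l • v l = (↑(g l) : PowerSeries (ZMod P)) * v l by rw [Algebra.smul_def]; rfl,
      PowerSeries.coeff_mul]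
    simp_rw [Polynomial.coeff_coe]
  simp_rw [hterm] at h0
  rw [Finset.sum_eq_single l₀] at h0
  · rw [Finset.sum_eq_single ((g l₀).natDegree, c)] at h0
    · rw [coeff_v, if_pos ⟨2 * D + 1, by rw [hc, hs_def]; rfl⟩, mul_one] at h0
      exact hne (Polynomial.leadingCoeff_eq_zero.mp h0)
    · rintro ⟨a, b'⟩ hab hne2
      rw [Finset.HasAntidiagonal.mem_antidiagonal] at hab
      rcases eq_or_ne ((g l₀).coeff a) 0 with h | h
      · rw [h, zero_mul]
      · have haD : a ≤ D := le_trans (Polynomial.le_natDegree_of_ne_zero h) (hdeg l₀)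
        rw [coeff_v]
        split
        · next hex =>
          exfalso
          obtain ⟨k, hk'⟩ := hex
          have hk2 : b' = expo p ((l₀ : ℕ) + 1) k := hk'
          obtain ⟨-, hkk⟩ := sep l₀ k a b' hab haD hk2
          apply hne2
          have hbc : b' = c := by rw [hk2, hkk, hc, hs_def]; rfl
          have hab2 : a + b' = N := hab
          have : a = (g l₀).natDegree := by omega
          rw [this, hbc]
        · rw [mul_zero]
    · intro hmem
      exfalso
      exact hmem (Finset.HasAntidiagonal.mem_antidiagonal.mpr (by omega))
  · rintro l - hlne
    apply Finset.sum_eq_zero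
    rintro ⟨a, b'⟩ hab
    rw [Finset.HasAntidiagonal.mem_antidiagonal] at hab
    rcases eq_or_ne ((g l).coeff a) 0 with h | h
    · rw [h, zero_mul]
    · have haD : a ≤ D := le_trans (Polynomial.le_natDegree_of_ne_zero h) (hdeg l)
      rw [coeff_v]
      split
      · next hex =>
        exfalso
        obtain ⟨k, hk'⟩ := hex
        have hk2 : b' = expo p ((l : ℕ) + 1) k := hk'
        exact hlne (sep l k a b' hab haD hk2).1
      · rw [mul_zero]
  · intro h
    exact absurd (Finset.mem_univ l₀) h

/-- `ofPowerSeries` as a `Polynomial K`-linear map. -/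
def ofPS (K : Type*) [Field K] : PowerSeries K →ₗ[Polynomial K] LaurentSeries K where
  toFun := HahnSeries.ofPowerSeries ℤ K
  map_add' := map_add _
  map_smul' q v := by
    simp only [RingHom.id_apply, Algebra.smul_def]
    show HahnSeries.ofPowerSeries ℤ K (algebraMap (Polynomial K) (PowerSeries K) q * v) = _
    rw [map_mul]
    rfl

theorem v_li (p n : ℕ) :
    LinearIndependent (RatFunc (ZMod P))
      (fun l : Fin n => (HahnSeries.ofPowerSeries ℤ (ZMod P))
        (PowerSeries.map (Int.castRingHom (ZMod P)) (u p ((l : ℕ) + 1)))) := by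
  have h1 := u_li P p n
  have h2 := h1.map' (ofPS (ZMod P))
    (LinearMap.ker_eq_bot.mpr HahnSeries.ofPowerSeries_injective)
  exact h2.localization (RatFunc (ZMod P)) (nonZeroDivisors (Polynomial (ZMod P)))

lemma li_smul {K M : Type*} [Field K] [AddCommGroup M] [Module K M] {n : ℕ} {v : Fin n → M}
    (hv : LinearIndependent K v) (c : K) (hc : c ≠ 0) :
    LinearIndependent K (fun l => c • v l) := by
  exact hv.units_smul fun _ => Units.mk0 c hc

/-! ### The sieve -/

theorem part_two (p : ℕ) [hp : Fact p.Prime] (d : ℕ) (hpd : p ≤ d) :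
    HasSieve (RatFunc (ZMod p)) (LaurentSeries (ZMod p)) p d (modP p (FF - swapXY FF)) := by
  have hp2 : 2 ≤ p := hp.out.two_le
  have hd1 : 1 ≤ d := by omega
  refine ⟨4 ^ (Nat.pair p d + 2), ?_, ?_⟩
  · intro l hl i hi1 hi2
    rw [show 4 ^ (Nat.pair p d + 2) + l * d + i = 4 ^ (Nat.pair p d + 2) + (l * d + i) by ring]
    rw [modP, PowerSeries.coeff_map, map_sub, coeff_FF]
    have hng := not_good_mid p d l i hp2 hpd hl hi1 hi2
    have hnotE : ∀ s, 4 ^ (Nat.pair p d + 2) + (l * d + i) ≠ 3 * 4 ^ s :=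
      notE_add (Nat.pair p d) _ (by omega) (pd_le' p d l i hl hd1 hi2)
    rw [fcoef, if_neg hng, swap_row_zero hnotE]
    simp
  · have hfam : (fun l : Fin p => PowerSeries.coeff (R := _)
          (4 ^ (Nat.pair p d + 2) + ((l : ℕ) + 1) * d) (modP p (FF - swapXY FF)))
        = fun l : Fin p => ((((p - 1).factorial : ℤ) : RatFunc (ZMod p))) •
            ((HahnSeries.ofPowerSeries ℤ (ZMod p))
              (PowerSeries.map (Int.castRingHom (ZMod p)) (u p ((l : ℕ) + 1)))) := by
      funext l
      have hl1 : 1 ≤ (l : ℕ) + 1 := by omega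
      have hlp : (l : ℕ) + 1 ≤ p := l.isLt
      have hz1 : 1 ≤ ((l : ℕ) + 1) * d := Nat.one_le_iff_ne_zero.mpr (by positivity)
      rw [modP, PowerSeries.coeff_map, map_sub, coeff_FF]
      have hg := good_col p d ((l : ℕ) + 1) hp.out hpd hl1 hlp
      have hnotE : ∀ s, 4 ^ (Nat.pair p d + 2) + ((l : ℕ) + 1) * d ≠ 3 * 4 ^ s :=
        notE_add (Nat.pair p d) _ hz1 (pd_le p d _ hlp hd1)
      rw [swap_row_zero hnotE, sub_zero, fcoef, if_pos hg]
      obtain ⟨-, hP, -, -, hL⟩ := decode_col p d ((l : ℕ) + 1) hd1 hl1 hlp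
      rw [hP, hL, map_zsmul, ← Int.cast_smul_eq_zsmul (RatFunc (ZMod p))]
      rw [RingHom.comp_apply]
    rw [hfam]
    apply li_smul (v_li p p p)
    -- the factorial is nonzero mod p
    have hinj : Function.Injective (algebraMap (ZMod p) (RatFunc (ZMod p))) :=
      RingHom.injective _
    rw [show ((((p - 1).factorial : ℤ) : RatFunc (ZMod p))) =
        algebraMap (ZMod p) (RatFunc (ZMod p)) (((p - 1).factorial : ℤ) : ZMod p) from
      (map_intCast (algebraMap (ZMod p) (RatFunc (ZMod p))) _).symm]
    intro h
    have h2 : (((p - 1).factorial : ℤ) : ZMod p) = 0 := by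
      apply hinj
      rw [h, map_zero]
    rw [Int.cast_natCast] at h2
    rw [ZMod.natCast_eq_zero_iff] at h2
    have := (Nat.Prime.dvd_factorial hp.out).mp h2
    omega

end L38

/-- **Lemma 3.8.** There is a power series `F ∈ ℤ⟦x,y⟧` whose class in
`ℤ⟦x,y⟧/(ℤ⟦x⟧·ℤ⟦y⟧)` is divisible by every prime, and such that for every prime `p` and
every `d ≥ p` the reduction of `F(x,y) − F(y,x)` modulo `p`, viewed in `(𝔽_p⸨x⸩)⟦y⟧`, has a
`p,d`-sieve with respect to `K = 𝔽_p(x)`. -/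
theorem exists_divisible_series_with_sieve :
    ∃ F : PowerSeries (PowerSeries ℤ),
      (∀ p : ℕ, p.Prime → ∃ G : PowerSeries (PowerSeries ℤ), F - p • G ∈ finiteRank) ∧
      (∀ (p : ℕ) [Fact p.Prime], ∀ d : ℕ, p ≤ d →
        HasSieve (RatFunc (ZMod p)) (LaurentSeries (ZMod p)) p d
          (modP p (F - swapXY F))) := by
  refine ⟨L38.FF, fun p hp => L38.part_one p hp, fun p _ d hpd => L38.part_two p d hpd⟩
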